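/- Let d ≥ 2 be an integer and k0 > 0. Then |κ(x)| ≥ √(k0·|k0 − |x||) for every x ∈ ℝ^{d−1}, and the function x ↦ 1/κ(x) is locally integrable on ℝ^{d−1}: for every R > 0, ∫_{|x| < R} 1/|κ(x)| dx < ∞. -/

import Mathlib

open MeasureTheory Set

noncomputable section

/-- The function `κ(x) = √(k0² - |x|²)` for `|x| ≤ k0` and `κ(x) = i√(|x|² - k0²)`
for `|x| > k0`. -/
def kappa (k0 : ℝ) {m : ℕ} (x : EuclideanSpace ℝ (Fin m)) : ℂ :=
  if ‖x‖ ≤ k0 then (Real.sqrt (k0 ^ 2 - ‖x‖ ^ 2) : ℂ)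
  else Complex.I * (Real.sqrt (‖x‖ ^ 2 - k0 ^ 2) : ℂ)

lemma abs_rpow_neg_half_intervalIntegrable (a b : ℝ) :
    IntervalIntegrable (fun t : ℝ => |t| ^ (-(2⁻¹) : ℝ)) volume a b := by
  have base : ∀ b : ℝ, 0 ≤ b →
      IntervalIntegrable (fun t : ℝ => |t| ^ (-(2⁻¹) : ℝ)) volume 0 b := by
    intro b hb
    have h := intervalIntegral.intervalIntegrable_rpow' (a := 0) (b := b)
      (r := -(2⁻¹)) (by norm_num)
    rw [intervalIntegrable_iff_integrableOn_Ioc_of_le hb] at h ⊢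
    exact h.congr_fun (fun t ht => by rw [abs_of_pos ht.1]) measurableSet_Ioc
  have all : ∀ b : ℝ, IntervalIntegrable (fun t : ℝ => |t| ^ (-(2⁻¹) : ℝ)) volume 0 b := by
    intro b
    rcases le_total 0 b with hb | hb
    · exact base b hb
    · have h := (base (-b) (by linarith))
      have h2 := (IntervalIntegrable.iff_comp_neg (by simp)).mp h
      simp only [neg_zero, neg_neg, abs_neg] at h2
      exact h2
  exact (all a).symm.trans (all b)

lemma radial_lintegral_aux {n : ℕ} (hn : 0 < n) (F : ℝ → ENNReal) (hF : Measurable F) :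
    ∫⁻ x : EuclideanSpace ℝ (Fin n), F ‖x‖ =
      (volume : Measure (EuclideanSpace ℝ (Fin n))).toSphere Set.univ *
        ∫⁻ y in Set.Ioi (0 : ℝ), ENNReal.ofReal (y ^ (n - 1)) * F y := by
  set E := EuclideanSpace ℝ (Fin n)
  haveI : Nontrivial E :=
    Module.nontrivial_of_finrank_pos (R := ℝ) (by rw [finrank_euclideanSpace_fin]; exact hn)
  have hdim : Module.finrank ℝ E = n := finrank_euclideanSpace_fin
  have step1 : ∫⁻ x : E, F ‖x‖ = ∫⁻ x in ({(0 : E)}ᶜ : Set E), F ‖x‖ := by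
    rw [restrict_compl_singleton]
  have step2 : ∫⁻ x in ({(0 : E)}ᶜ : Set E), F ‖x‖ =
      ∫⁻ x : ({(0 : E)}ᶜ : Set E), F ‖(x : E)‖ ∂((volume : Measure E).comap (↑)) :=
    (lintegral_subtype_comap (measurableSet_singleton 0).compl _).symm
  have step3 : ∫⁻ x : ({(0 : E)}ᶜ : Set E), F ‖(x : E)‖ ∂((volume : Measure E).comap (↑)) =
      ∫⁻ p : Metric.sphere (0 : E) 1 × Set.Ioi (0 : ℝ), F p.2
        ∂((volume : Measure E).toSphere.prod
            (Measure.volumeIoiPow (Module.finrank ℝ E - 1))) := by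
    rw [← (Measure.measurePreserving_homeomorphUnitSphereProd
      (volume : Measure E)).lintegral_comp_emb (Homeomorph.measurableEmbedding _)
      (fun p => F p.2)]
    simp [homeomorphUnitSphereProd, homeomorphSphereProd_apply_snd_coe]
  have step4 : ∫⁻ p : Metric.sphere (0 : E) 1 × Set.Ioi (0 : ℝ), F p.2
        ∂((volume : Measure E).toSphere.prod
            (Measure.volumeIoiPow (Module.finrank ℝ E - 1))) =
      (volume : Measure E).toSphere Set.univ *
        ∫⁻ y : Set.Ioi (0 : ℝ), F y ∂(Measure.volumeIoiPow (n - 1)) := by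
    rw [hdim, lintegral_prod (fun p : Metric.sphere (0 : E) 1 × Set.Ioi (0 : ℝ) => F ↑p.2)
      ((show Measurable fun p : Metric.sphere (0 : E) 1 × Set.Ioi (0 : ℝ) => F ↑p.2 from
        hF.comp (measurable_subtype_coe.comp measurable_snd)).aemeasurable)]
    simp [lintegral_const, mul_comm]
  have step5 : ∫⁻ y : Set.Ioi (0 : ℝ), F y ∂(Measure.volumeIoiPow (n - 1)) =
      ∫⁻ y in Set.Ioi (0 : ℝ), ENNReal.ofReal (y ^ (n - 1)) * F y := by
    rw [Measure.volumeIoiPow,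
      lintegral_withDensity_eq_lintegral_mul _
        ((measurable_subtype_coe.pow_const _).ennreal_ofReal)
        (show Measurable fun y : Set.Ioi (0 : ℝ) => F ↑y from hF.comp measurable_subtype_coe)]
    simp only [Pi.mul_apply]
    exact lintegral_subtype_comap measurableSet_Ioi
      (fun y : ℝ => ENNReal.ofReal (y ^ (n - 1)) * F y)
  rw [step1, step2, step3, step4, step5]

theorem kappa_inv_locally_integrable (d : ℕ) (hd : 2 ≤ d) (k0 : ℝ) (hk0 : 0 < k0) :
    (∀ x : EuclideanSpace ℝ (Fin (d - 1)),
        Real.sqrt (k0 * |k0 - ‖x‖|) ≤ ‖kappa k0 x‖) ∧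
    (∀ R > (0 : ℝ),
      IntegrableOn (fun x : EuclideanSpace ℝ (Fin (d - 1)) => (‖kappa k0 x‖)⁻¹)
        (Metric.ball 0 R)) := by
  set n := d - 1 with hn
  have hn1 : 0 < n := by omega
  set E := EuclideanSpace ℝ (Fin n)
  -- Part 1
  have part1 : ∀ x : E, Real.sqrt (k0 * |k0 - ‖x‖|) ≤ ‖kappa k0 x‖ := by
    intro x
    have hx0 : (0 : ℝ) ≤ ‖x‖ := norm_nonneg x
    by_cases hx : ‖x‖ ≤ k0
    · rw [kappa, if_pos hx, Complex.norm_real, Real.norm_eq_abs, abs_of_nonneg (Real.sqrt_nonneg _)]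
      apply Real.sqrt_le_sqrt
      rw [abs_of_nonneg (by linarith)]
      nlinarith
    · push_neg at hx
      rw [kappa, if_neg (not_le.mpr hx), norm_mul, Complex.norm_I, one_mul,
        Complex.norm_real, Real.norm_eq_abs, abs_of_nonneg (Real.sqrt_nonneg _)]
      apply Real.sqrt_le_sqrt
      rw [abs_of_nonpos (by linarith), neg_sub]
      nlinarith
  refine ⟨part1, ?_⟩
  intro R hR
  -- the dominating radial profile
  set g0 : ℝ → ℝ := fun y => (Real.sqrt (k0 * |k0 - y|))⁻¹ with hg0
  have hg0meas : Measurable g0 :=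
    ((Real.continuous_sqrt.comp (by continuity)).measurable).inv
  -- 1D integrability of `g0` on `Ioo 0 R`
  have h1d : IntegrableOn g0 (Ioo 0 R) := by
    have h1 : IntervalIntegrable (fun y : ℝ => |y - k0| ^ (-(2⁻¹) : ℝ)) volume 0 R := by
      have := (abs_rpow_neg_half_intervalIntegrable (-k0) (R - k0)).comp_sub_right k0
      simpa using this
    have h2 : IntegrableOn (fun y : ℝ => |y - k0| ^ (-(2⁻¹) : ℝ)) (Ioo 0 R) := by
      rwa [intervalIntegrable_iff_integrableOn_Ioo_of_le hR.le] at h1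
    have heq : ∀ y : ℝ, g0 y = (Real.sqrt k0)⁻¹ * |y - k0| ^ (-(2⁻¹) : ℝ) := by
      intro y
      show (Real.sqrt (k0 * |k0 - y|))⁻¹ = _
      rw [abs_sub_comm k0 y, Real.sqrt_mul hk0.le, mul_inv]
      congr 1
      rw [Real.sqrt_eq_rpow, ← Real.rpow_neg (abs_nonneg _)]
      norm_num
    have h3 : IntegrableOn (fun y : ℝ => (Real.sqrt k0)⁻¹ * |y - k0| ^ (-(2⁻¹) : ℝ))
        (Ioo 0 R) := h2.const_mul (Real.sqrt k0)⁻¹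
    exact IntegrableOn.congr_fun h3 (fun y _ => (heq y).symm) measurableSet_Ioo
  -- integrability of the radial dominating function on the ball
  have hgball : IntegrableOn (fun x : E => g0 ‖x‖) (Metric.ball 0 R) := by
    constructor
    · exact ((hg0meas.comp measurable_norm).aestronglyMeasurable).restrict
    · rw [hasFiniteIntegral_iff_ofReal (ae_of_all _ fun x =>
        inv_nonneg.mpr (Real.sqrt_nonneg _))]
      set F : ℝ → ENNReal := (Iio R).indicator (fun y => ENNReal.ofReal (g0 y)) with hF
      have hFmeas : Measurable F :=
        Measurable.indicator (hg0meas.ennreal_ofReal) measurableSet_Iio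
      have hkey : ∫⁻ x in Metric.ball (0 : E) R, ENNReal.ofReal (g0 ‖x‖) =
          ∫⁻ x : E, F ‖x‖ := by
        rw [← lintegral_indicator measurableSet_ball]
        congr 1
        funext x
        by_cases hx : ‖x‖ < R
        · rw [Set.indicator_of_mem (mem_ball_zero_iff.mpr hx),
            hF, Set.indicator_of_mem (mem_Iio.mpr hx)]
        · rw [Set.indicator_of_notMem (fun h => hx (mem_ball_zero_iff.mp h)),
            hF, Set.indicator_of_notMem (fun h => hx (mem_Iio.mp h))]
      rw [hkey, radial_lintegral_aux hn1 F hFmeas]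
      apply ENNReal.mul_lt_top (measure_lt_top _ _)
      -- bound the 1D weighted integral
      have hbd : ∀ y ∈ Ioi (0 : ℝ), ENNReal.ofReal (y ^ (n - 1)) * F y ≤
          (Ioo (0 : ℝ) R).indicator
            (fun y => ENNReal.ofReal (max R 1 ^ (n - 1)) * ENNReal.ofReal (g0 y)) y := by
        intro y hy
        have hy0 : (0 : ℝ) < y := hy
        by_cases hyR : y < R
        · have e1 : F y = ENNReal.ofReal (g0 y) :=
            Set.indicator_of_mem (mem_Iio.mpr hyR) _
          have e2 : (Ioo (0 : ℝ) R).indicator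
              (fun y => ENNReal.ofReal (max R 1 ^ (n - 1)) * ENNReal.ofReal (g0 y)) y =
              ENNReal.ofReal (max R 1 ^ (n - 1)) * ENNReal.ofReal (g0 y) :=
            Set.indicator_of_mem (Set.mem_Ioo.mpr ⟨hy0, hyR⟩) _
          rw [e1, e2]
          have hpow : y ^ (n - 1) ≤ max R 1 ^ (n - 1) :=
            pow_le_pow_left₀ hy0.le (le_trans hyR.le (le_max_left _ _)) _
          exact mul_le_mul' (ENNReal.ofReal_le_ofReal hpow) le_rfl
        · have e1 : F y = 0 :=
            Set.indicator_of_notMem (fun h => hyR (mem_Iio.mp h)) _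
          rw [e1, mul_zero]
          exact zero_le
      calc ∫⁻ y in Ioi (0 : ℝ), ENNReal.ofReal (y ^ (n - 1)) * F y
          ≤ ∫⁻ y in Ioi (0 : ℝ), (Ioo (0 : ℝ) R).indicator
              (fun y => ENNReal.ofReal (max R 1 ^ (n - 1)) * ENNReal.ofReal (g0 y)) y :=
            setLIntegral_mono' measurableSet_Ioi hbd
        _ ≤ ∫⁻ y, (Ioo (0 : ℝ) R).indicator
              (fun y => ENNReal.ofReal (max R 1 ^ (n - 1)) * ENNReal.ofReal (g0 y)) y :=
            setLIntegral_le_lintegral _ _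
        _ = ENNReal.ofReal (max R 1 ^ (n - 1)) * ∫⁻ y in Ioo (0 : ℝ) R,
              ENNReal.ofReal (g0 y) := by
            rw [lintegral_indicator measurableSet_Ioo,
              lintegral_const_mul _ hg0meas.ennreal_ofReal]
        _ < ⊤ := ENNReal.mul_lt_top ENNReal.ofReal_lt_top h1d.setLIntegral_lt_top
  -- measurability of the target function
  have hkmeas : Measurable fun x : E => (‖kappa k0 x‖)⁻¹ := by
    have h1 : Measurable fun x : E => kappa k0 x := by
      unfold kappa
      exact Measurable.ite (measurableSet_le measurable_norm measurable_const)
        (Complex.continuous_ofReal.comp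
          (Real.continuous_sqrt.comp (by continuity))).measurable
        ((continuous_const.mul (Complex.continuous_ofReal.comp
          (Real.continuous_sqrt.comp (by continuity)))).measurable)
    exact (continuous_norm.measurable.comp h1).inv
  -- conclude by domination
  refine Integrable.mono' hgball hkmeas.aestronglyMeasurable.restrict ?_
  refine ae_of_all _ fun x => ?_
  rw [Real.norm_eq_abs, abs_of_nonneg (inv_nonneg.mpr (norm_nonneg _))]
  by_cases hx : ‖x‖ = k0
  · have hk : kappa k0 x = 0 := by
      rw [kappa, if_pos (le_of_eq hx), hx]
      simp
    rw [hk, norm_zero, inv_zero]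
    exact inv_nonneg.mpr (Real.sqrt_nonneg _)
  · have hpos : 0 < Real.sqrt (k0 * |k0 - ‖x‖|) :=
      Real.sqrt_pos.mpr (mul_pos hk0 (abs_pos.mpr (sub_ne_zero.mpr fun h => hx h.symm)))
    exact inv_anti₀ hpos (part1 x)

end
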